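/- Let X be a locally path connected and semilocally simply connected topological space. Let Π₁(X)^{(2)} = {(a,b) ∈ Π₁(X) × Π₁(X) : s(a) = r(b)} carry the subspace topology of the product. Then the composition map Π₁(X)^{(2)} → Π₁(X), which sends ([α],[β]) with α(0) = β(1) to the path-homotopy class [α ⧠ β] of the concatenation, is well defined and continuous. -/

import Mathlib

open unitInterval

noncomputable section

variable {X : Type*} [TopologicalSpace X]

/-- The path-homotopy (homotopy relative to `{0,1}`) relation on `C(I, X)`. -/
def pRel (f g : C(I, X)) : Prop := f.HomotopicRel g {0, 1}

/-- The path-homotopy setoid on `C(I, X)`. -/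
def pSetoid (X : Type*) [TopologicalSpace X] : Setoid C(I, X) :=
  ⟨pRel, ContinuousMap.HomotopicRel.equivalence⟩

/-- The fundamental groupoid `Π₁(X)` as the quotient of the path space `P(X) = C(I, X)`
(with the compact-open topology) by path homotopy; it carries the quotient (CO') topology. -/
abbrev Pi1 (X : Type*) [TopologicalSpace X] := Quotient (pSetoid X)

/-- The quotient map `q : P(X) → Π₁(X)`. -/
def pq : C(I, X) → Pi1 X := Quotient.mk (pSetoid X)

theorem pRel.endpts {f g : C(I, X)} (h : pRel f g) {t : I} (ht : t ∈ ({0, 1} : Set I)) :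
    f t = g t := h.some.fst_eq_snd ht

/-- The source map `s : Π₁(X) → X`, `[γ] ↦ γ(0)`. -/
def srcMap : Pi1 X → X :=
  Quotient.lift (fun f : C(I, X) => f 0) fun _ _ h =>
    pRel.endpts h (by simp)

/-- The range map `r : Π₁(X) → X`, `[γ] ↦ γ(1)`. -/
def rngMap : Pi1 X → X :=
  Quotient.lift (fun f : C(I, X) => f 1) fun _ _ h =>
    pRel.endpts h (by simp)

/-- A continuous map `I → X` regarded as a `Path` between its endpoints. -/
def toPath (f : C(I, X)) : Path (f 0) (f 1) := ⟨f, rfl, rfl⟩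

/-- Concatenation `α ⧠ β` of paths: traverse `β` first and then `α`
(given `β 1 = α 0`). -/
def concat (α β : C(I, X)) (h : β 1 = α 0) : C(I, X) :=
  ((toPath β).trans ((toPath α).cast h rfl)).toContinuousMap

@[simp] theorem concat_zero (α β : C(I, X)) (h : β 1 = α 0) : concat α β h 0 = β 0 :=
  ((toPath β).trans ((toPath α).cast h rfl)).source

@[simp] theorem concat_one (α β : C(I, X)) (h : β 1 = α 0) : concat α β h 1 = α 1 :=
  ((toPath β).trans ((toPath α).cast h rfl)).target

/-- The set `N([γ], U, V) = {[δ ⧠ γ ⧠ θ] : δ a path in U with δ 0 = γ 1,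
θ a path in V with θ 1 = γ 0}` in `Π₁(X)`. -/
def Nhd (a : Pi1 X) (U V : Set X) : Set (Pi1 X) :=
  { b | ∃ (γ δ θ : C(I, X)) (h₁ : θ 1 = γ 0) (h₂ : γ 1 = δ 0),
      pq γ = a ∧ Set.range δ ⊆ U ∧ Set.range θ ⊆ V ∧
      b = pq (concat δ (concat γ θ h₁) ((concat_one γ θ h₁).trans h₂)) }

/-- A subset `U ⊆ X` is relatively inessential in `X` if every loop in `U` is
null-homotopic (path-homotopic to a constant path) in `X`. -/
def RelInessential (X : Type*) [TopologicalSpace X] (U : Set X) : Prop :=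
  ∀ γ : C(I, X), Set.range γ ⊆ U → γ 1 = γ 0 →
    pRel γ (ContinuousMap.const I (γ 0))

/-- `X` is semilocally simply connected if every point has a relatively inessential
open neighbourhood. -/
def SemilocSimplyConnected (X : Type*) [TopologicalSpace X] : Prop :=
  ∀ x : X, ∃ U : Set X, IsOpen U ∧ x ∈ U ∧ RelInessential X U


namespace Stmt4

open Set

/-! ### Basic facts about `pRel`, and a cast-insensitive homotopy relation on paths -/

theorem pRel_refl (f : C(I, X)) : pRel f f := (pSetoid X).iseqv.refl f

theorem pRel_symm {f g : C(I, X)} (h : pRel f g) : pRel g f := (pSetoid X).iseqv.symm h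

theorem pRel_trans {f g h : C(I, X)} (h₁ : pRel f g) (h₂ : pRel g h) : pRel f h :=
  (pSetoid X).iseqv.trans h₁ h₂

theorem pRel_of_eq {f g : C(I, X)} (h : f = g) : pRel f g := h ▸ pRel_refl f

/-- Homotopy rel endpoints between paths whose endpoints need not be syntactically equal. -/
def PHom {x y x' y' : X} (p : Path x y) (q : Path x' y') : Prop :=
  pRel p.toContinuousMap q.toContinuousMap

theorem PHom.of {x y : X} {p q : Path x y} (h : p.Homotopic q) : PHom p q := h

theorem PHom.toHomotopic {x y : X} {p q : Path x y} (h : PHom p q) : p.Homotopic q := h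

theorem PHom.refl' {x y : X} (p : Path x y) : PHom p p := pRel_refl _

theorem PHom.symm' {x y x' y' : X} {p : Path x y} {q : Path x' y'} (h : PHom p q) : PHom q p :=
  pRel_symm h

theorem PHom.trans' {x y x' y' x'' y'' : X} {p : Path x y} {q : Path x' y'} {r : Path x'' y''}
    (h₁ : PHom p q) (h₂ : PHom q r) : PHom p r := pRel_trans h₁ h₂

theorem PHom.src {x y x' y' : X} {p : Path x y} {q : Path x' y'} (h : PHom p q) : x = x' := by
  have := pRel.endpts h (t := 0) (by simp)
  simpa using this

theorem PHom.tgt {x y x' y' : X} {p : Path x y} {q : Path x' y'} (h : PHom p q) : y = y' := by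
  have := pRel.endpts h (t := 1) (by simp)
  simpa using this

theorem PHom.ofEq {x y x' y' : X} {p : Path x y} {q : Path x' y'} (h : ∀ t, p t = q t) :
    PHom p q := by
  have hx : x = x' := by rw [← p.source, ← q.source]; exact h 0
  have hy : y = y' := by rw [← p.target, ← q.target]; exact h 1
  subst hx; subst hy
  have : p = q := by ext t; exact h t
  exact this ▸ PHom.refl' p

theorem PHom.hcomp {x y z x' y' z' : X} {p : Path x y} {q : Path y z} {p' : Path x' y'}
    {q' : Path y' z'} (hp : PHom p p') (hq : PHom q q') : PHom (p.trans q) (p'.trans q') := by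
  obtain rfl := hp.src
  obtain rfl := hp.tgt
  obtain rfl := hq.tgt
  exact PHom.of (Path.Homotopic.hcomp hp.toHomotopic hq.toHomotopic)

theorem phom_assoc {w x y z : X} (p : Path w x) (q : Path x y) (r : Path y z) :
    PHom ((p.trans q).trans r) (p.trans (q.trans r)) :=
  PHom.of ⟨Path.Homotopy.transAssoc p q r⟩

theorem phom_reflTrans {x y : X} (p : Path x y) : PHom ((Path.refl x).trans p) p :=
  PHom.of ⟨Path.Homotopy.reflTrans p⟩

theorem phom_transRefl {x y : X} (p : Path x y) : PHom (p.trans (Path.refl y)) p :=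
  PHom.of ⟨Path.Homotopy.transRefl p⟩

theorem phom_transSymm {x y : X} (p : Path x y) : PHom (p.trans p.symm) (Path.refl x) :=
  (PHom.of ⟨Path.Homotopy.reflTransSymm p⟩).symm'

theorem phom_symmTrans {x y : X} (p : Path x y) : PHom (p.symm.trans p) (Path.refl y) :=
  (PHom.of ⟨Path.Homotopy.reflSymmTrans p⟩).symm'

theorem phom_cancel_middle {x y z w : X} (A : Path x y) (c : Path y z) (B : Path y w) :
    PHom ((A.trans c).trans (c.symm.trans B)) (A.trans B) := by
  refine (phom_assoc _ _ _).trans' (PHom.hcomp (PHom.refl' A) ?_)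
  refine ((phom_assoc c c.symm B).symm').trans' ?_
  exact (PHom.hcomp (phom_transSymm c) (PHom.refl' B)).trans' (phom_reflTrans B)

theorem phom_unsymm {a b : X} {v : Path a b} {w : Path b a}
    (h : PHom (v.trans w) (Path.refl a)) : PHom v w.symm := by
  refine ((phom_transRefl v).symm').trans' ?_
  refine (PHom.hcomp (PHom.refl' v) ((phom_transSymm w).symm')).trans' ?_
  refine ((phom_assoc v w w.symm).symm').trans' ?_
  exact (PHom.hcomp h (PHom.refl' w.symm)).trans' (phom_reflTrans w.symm)

theorem phom_of_loop {a b a' b' : X} (u : Path a b) (u' : Path a' b') (c : Path a a')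
    (d : Path b b') (hL : PHom ((c.trans u').trans (d.symm.trans u.symm)) (Path.refl a)) :
    PHom u' (c.symm.trans (u.trans d)) := by
  have h1 : PHom (c.trans u') ((d.symm.trans u.symm).symm) := phom_unsymm hL
  have h2 : (d.symm.trans u.symm).symm = u.trans d := by
    rw [Path.trans_symm, Path.symm_symm, Path.symm_symm]
  rw [h2] at h1
  refine ((phom_reflTrans u').symm').trans' ?_
  refine (PHom.hcomp ((phom_transSymm c.symm).symm') (PHom.refl' u')).trans' ?_
  refine (phom_assoc _ _ _).trans' ?_
  refine PHom.hcomp (PHom.refl' c.symm) ?_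
  refine (PHom.hcomp (PHom.ofEq (p := c.symm.symm) (q := c)
    (fun t => by rw [Path.symm_symm])) (PHom.refl' u')).trans' h1

theorem pq_eq_of_phom {x y x' y' : X} {p : Path x y} {q : Path x' y'} (h : PHom p q) :
    pq p.toContinuousMap = pq q.toContinuousMap := Quotient.sound h

theorem phom_of_pq_eq {x y x' y' : X} {p : Path x y} {q : Path x' y'}
    (h : pq p.toContinuousMap = pq q.toContinuousMap) : PHom p q := Quotient.exact h

theorem toPath_toCM (f : C(I, X)) : (toPath f).toContinuousMap = f := rfl

theorem pRel_phom {f g : C(I, X)} (h : pRel f g) : PHom (toPath f) (toPath g) := h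

/-! ### Subpaths and splitting -/

/-- The restriction of `f : C(I, X)` to `[a, b]`, as a path, affinely reparametrized. -/
def subpath (f : C(I, X)) (a b : I) (hab : a ≤ b) : Path (f a) (f b) where
  toFun t := f ⟨(a : ℝ) + (t : ℝ) * ((b : ℝ) - a), by
    have h1 := t.2.1; have h2 := t.2.2; have h3 := a.2.1; have h4 := b.2.2
    have h5 : (a : ℝ) ≤ b := hab
    constructor <;> nlinarith⟩
  continuous_toFun := f.continuous.comp (by
    apply Continuous.subtype_mk
    fun_prop)
  source' := congrArg f (Subtype.ext (by simp))
  target' := congrArg f (Subtype.ext (by simp))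

theorem subpath_apply (f : C(I, X)) (a b : I) (hab : a ≤ b) (t : I)
    (h : (a : ℝ) + (t : ℝ) * ((b : ℝ) - a) ∈ I) :
    subpath f a b hab t = f ⟨(a : ℝ) + (t : ℝ) * ((b : ℝ) - a), h⟩ := rfl

theorem subpath_range (f : C(I, X)) (a b : I) (hab : a ≤ b) :
    range (subpath f a b hab) ⊆ f '' (Icc a b) := by
  rintro x ⟨t, rfl⟩
  have h1 := t.2.1; have h2 := t.2.2
  have h5 : (a : ℝ) ≤ b := hab
  refine ⟨_, ⟨?_, ?_⟩, rfl⟩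
  · exact Subtype.coe_le_coe.mp (by simp only []; nlinarith) 
  · exact Subtype.coe_le_coe.mp (by simp only []; nlinarith)

theorem subpath_split (f : C(I, X)) {a c b : I} (hac : a ≤ c) (hcb : c ≤ b)
    (hlt : (a : ℝ) < b) :
    PHom (subpath f a b (hac.trans hcb)) ((subpath f a c hac).trans (subpath f c b hcb)) := by
  have hac' : (a : ℝ) ≤ c := hac
  have hcb' : (c : ℝ) ≤ b := hcb
  have hba : (0 : ℝ) < (b : ℝ) - a := by linarith
  set ψ : ℝ → ℝ := fun t =>
    (if t ≤ 1 / 2 then 2 * t * ((c : ℝ) - a) else ((c : ℝ) - a) + (2 * t - 1) * ((b : ℝ) - c)) /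
      ((b : ℝ) - a) with hψdef
  have hψc : Continuous ψ := by
    apply Continuous.div_const
    apply Continuous.if_le (by fun_prop) (by fun_prop) continuous_id continuous_const
    intro t ht
    simp only [id_eq] at ht
    subst ht
    norm_num
  have hmem : ∀ t : I, ψ t ∈ I := by
    intro t
    have h1 := t.2.1; have h2 := t.2.2
    constructor
    · apply div_nonneg _ (le_of_lt hba)
      split_ifs with h <;> nlinarith
    · rw [div_le_one hba]
      split_ifs with h <;> nlinarith
  set φ : I → I := fun t => ⟨ψ t, hmem t⟩ with hφdef
  have hφc : Continuous φ := Continuous.subtype_mk (hψc.comp continuous_subtype_val) _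
  have hφ0 : φ 0 = 0 := by
    ext
    show ψ ((0 : I) : ℝ) = 0
    simp only [hψdef, Icc.coe_zero]
    rw [if_pos (by norm_num)]
    simp
  have hφ1 : φ 1 = 1 := by
    ext
    show ψ ((1 : I) : ℝ) = 1
    simp only [hψdef, Icc.coe_one]
    rw [if_neg (by norm_num)]
    field_simp
    ring
  have heq : (subpath f a b (hac.trans hcb)).reparam φ hφc hφ0 hφ1
      = (subpath f a c hac).trans (subpath f c b hcb) := by
    ext t
    rw [Path.trans_apply]
    split_ifs with h
    · show f _ = f _
      apply congrArg f; ext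
      show (a : ℝ) + ψ t * ((b : ℝ) - a) = (a : ℝ) + (2 * t) * ((c : ℝ) - a)
      simp only [hψdef]
      rw [if_pos h, div_mul_cancel₀ _ (ne_of_gt hba)]
    · show f _ = f _
      apply congrArg f; ext
      show (a : ℝ) + ψ t * ((b : ℝ) - a) = (c : ℝ) + (2 * t - 1) * ((b : ℝ) - c)
      simp only [hψdef]
      rw [if_neg h, div_mul_cancel₀ _ (ne_of_gt hba)]
      ring
  refine (PHom.of ⟨Path.Homotopy.reparam _ φ hφc hφ0 hφ1⟩).trans' ?_
  rw [heq]
  exact PHom.refl' _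

/-! ### The partition points -/

/-- `ptn n j = min (j/n) 1` as a point of `I`. -/
def ptn (n : ℕ) (j : ℕ) : I :=
  ⟨min ((j : ℝ) / n) 1, by
    constructor
    · apply le_min (by positivity) zero_le_one
    · exact min_le_right _ _⟩

theorem ptn_coe {n j : ℕ} (hn : 0 < n) (hj : j ≤ n) : (ptn n j : ℝ) = (j : ℝ) / n := by
  have : (j : ℝ) / n ≤ 1 := by
    rw [div_le_one (by positivity)]; exact_mod_cast hj
  exact min_eq_left this

theorem ptn_zero (n : ℕ) : ptn n 0 = 0 := by
  ext; simp [ptn]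

theorem ptn_n {n : ℕ} (hn : 0 < n) : ptn n n = 1 := by
  ext; simp [ptn, div_self (show (n : ℝ) ≠ 0 by positivity)]

theorem ptn_mono {n : ℕ} {j k : ℕ} (hjk : j ≤ k) : ptn n j ≤ ptn n k := by
  have hjk' : (j : ℝ) ≤ k := by exact_mod_cast hjk
  have hdiv : (j : ℝ) / n ≤ (k : ℝ) / n := by
    rcases Nat.eq_zero_or_pos n with h | h
    · simp [h]
    · have hn : (0 : ℝ) < n := by exact_mod_cast h
      exact (div_le_div_iff_of_pos_right hn).mpr hjk'
  exact Subtype.mk_le_mk.mpr (min_le_min hdiv le_rfl)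

/-! ### The core induction: a path is homotopic to `c₀⁻¹ ⧠ (companion) ⧠ cₙ` -/

theorem core (f g : C(I, X)) (n : ℕ) (hn : 0 < n) (W : ℕ → Set X)
    (hWi : ∀ i, i < n → RelInessential X (W i))
    (hf : ∀ i, i < n → MapsTo f (Icc (ptn n i) (ptn n (i + 1))) (W i))
    (hg : ∀ i, i < n → MapsTo g (Icc (ptn n i) (ptn n (i + 1))) (W i))
    (c : ∀ j, j ≤ n → Path (f (ptn n j)) (g (ptn n j)))
    (hc1 : ∀ j (hj0 : 0 < j) (hj : j ≤ n), range (c j hj) ⊆ W (j - 1))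
    (hc2 : ∀ j (hj : j < n), range (c j hj.le) ⊆ W j) :
    ∀ k (hk : k ≤ n),
      PHom (subpath g (ptn n 0) (ptn n k) (ptn_mono (Nat.zero_le k)))
        (((c 0 (Nat.zero_le n)).symm.trans
            (subpath f (ptn n 0) (ptn n k) (ptn_mono (Nat.zero_le k)))).trans (c k hk)) := by
  have hsub : ∀ (h' : C(I, X)), PHom (subpath h' (ptn n 0) (ptn n 0) le_rfl)
      (Path.refl (h' (ptn n 0))) := by
    intro h'
    apply PHom.ofEq
    intro t
    show h' _ = h' _
    apply congrArg; ext
    show (ptn n 0 : ℝ) + (t : ℝ) * ((ptn n 0 : ℝ) - (ptn n 0 : ℝ)) = (ptn n 0 : ℝ)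
    ring
  intro k
  induction k with
  | zero =>
    intro hk
    refine (hsub g).trans' ?_
    refine ((phom_symmTrans (c 0 (Nat.zero_le n))).symm').trans' ?_
    refine PHom.hcomp ?_ (PHom.refl' _)
    refine ((phom_transRefl (c 0 (Nat.zero_le n)).symm).symm').trans' ?_
    exact PHom.hcomp (PHom.refl' _) ((hsub f).symm')
  | succ k ih =>
    intro hk1
    have hk' : k ≤ n := Nat.le_of_succ_le hk1
    have hkn : k < n := hk1
    have ha : ptn n 0 ≤ ptn n k := ptn_mono (Nat.zero_le k)
    have hab : ptn n k ≤ ptn n (k + 1) := ptn_mono (Nat.le_succ k)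
    have hb0 : ((ptn n 0 : I) : ℝ) < ptn n (k + 1) := by
      rw [ptn_zero, ptn_coe hn hk1, Icc.coe_zero]
      positivity
    set u := subpath f (ptn n k) (ptn n (k + 1)) hab with hu_def
    set u' := subpath g (ptn n k) (ptn n (k + 1)) hab with hu'_def
    set cc := c k hk' with hcc_def
    set d := c (k + 1) hk1 with hd_def
    have hu : range u ⊆ W k := (subpath_range _ _ _ _).trans ((hf k hkn).image_subset)
    have hu' : range u' ⊆ W k := (subpath_range _ _ _ _).trans ((hg k hkn).image_subset)
    have hcc : range cc ⊆ W k := hc2 k hkn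
    have hd : range d ⊆ W k := by
      have := hc1 (k + 1) (Nat.succ_pos k) hk1
      simpa using this
    set L := (cc.trans u').trans (d.symm.trans u.symm) with hL_def
    have hLrange : range L.toContinuousMap ⊆ W k := by
      show range L ⊆ W k
      simp only [hL_def, Path.trans_range, Path.symm_range]
      exact union_subset (union_subset hcc hu') (union_subset hd hu)
    have hL1 : L.toContinuousMap 1 = L.toContinuousMap 0 := by
      show L 1 = L 0
      rw [L.source, L.target]
    have hnull := hWi k hkn L.toContinuousMap hLrange hL1
    have hrefl : PHom L (Path.refl (f (ptn n k))) := by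
      refine pRel_trans hnull (pRel_of_eq ?_)
      ext t
      show L.toContinuousMap 0 = f (ptn n k)
      exact L.source
    have hloop := phom_of_loop u u' cc d hrefl
    refine (subpath_split g ha hab hb0).trans' ?_
    refine (PHom.hcomp (ih hk') hloop).trans' ?_
    refine (phom_cancel_middle _ cc (u.trans d)).trans' ?_
    refine ((phom_assoc _ u d).symm').trans' ?_
    refine PHom.hcomp ?_ (PHom.refl' d)
    refine (phom_assoc (c 0 (Nat.zero_le n)).symm _ u).trans' ?_
    exact PHom.hcomp (PHom.refl' _) ((subpath_split f ha hab hb0).symm')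

/-! ### The nearby-paths lemma -/

theorem relInessential_mono {U V : Set X} (h : RelInessential X U) (hVU : V ⊆ U) :
    RelInessential X V := fun γ hγ h10 => h γ (hγ.trans hVU) h10

theorem good_sets (hX : SemilocSimplyConnected X) [LocallyPathConnectedSpace X] (x : X)
    (O : Set X) (hO : IsOpen O) (hxO : x ∈ O) :
    ∃ S : Set X, IsOpen S ∧ x ∈ S ∧ RelInessential X S ∧ S ⊆ O := by
  obtain ⟨R, hRopen, hxR, hRi⟩ := hX x
  refine ⟨pathComponentIn (R ∩ O) x, (hRopen.inter hO).pathComponentIn x,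
    mem_pathComponentIn_self ⟨hxR, hxO⟩,
    relInessential_mono hRi (pathComponentIn_subset.trans inter_subset_left), ?_⟩
  exact pathComponentIn_subset.trans inter_subset_right

theorem nearby (hX : SemilocSimplyConnected X) [LocallyPathConnectedSpace X] (β : C(I, X))
    {U V : Set X} (hU : IsOpen U) (h1 : β 1 ∈ U) (hV : IsOpen V) (h0 : β 0 ∈ V) :
    ∃ N : Set C(I, X), IsOpen N ∧ β ∈ N ∧ ∀ β' ∈ N,
      ∃ (θ : Path (β' 0) (β 0)) (δ : Path (β 1) (β' 1)),
        range θ ⊆ V ∧ range δ ⊆ U ∧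
        PHom (toPath β') ((θ.trans (toPath β)).trans δ) := by
  classical
  have hgood : ∀ t : I, ∃ S : Set X, IsOpen S ∧ β t ∈ S ∧ RelInessential X S := by
    intro t
    obtain ⟨S, ha, hb, hcc, _⟩ := good_sets hX (β t) univ isOpen_univ (mem_univ _)
    exact ⟨S, ha, hb, hcc⟩
  choose St hSto hStm hSti using hgood
  obtain ⟨S0, hS0o, hS0m, hS0i, hS0V⟩ := good_sets hX (β 0) V hV h0
  obtain ⟨S1, hS1o, hS1m, hS1i, hS1U⟩ := good_sets hX (β 1) U hU h1
  set E : Unit ⊕ Unit ⊕ I → Set I := fun i =>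
    Sum.rec (fun _ => β ⁻¹' S0 ∩ {s : I | (s : ℝ) < 1 / 2})
      (Sum.rec (fun _ => β ⁻¹' S1 ∩ {s : I | 1 / 2 < (s : ℝ)})
        (fun t => β ⁻¹' (St t) ∩ ({s : I | 0 < (s : ℝ)} ∩ {s : I | (s : ℝ) < 1}))) i with hEdef
  have hEo : ∀ i, IsOpen (E i) := by
    rintro (i | i | t)
    · exact (hS0o.preimage β.continuous).inter (isOpen_lt continuous_subtype_val continuous_const)
    · exact (hS1o.preimage β.continuous).inter (isOpen_lt continuous_const continuous_subtype_val)
    · exact ((hSto t).preimage β.continuous).inter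
        ((isOpen_lt continuous_const continuous_subtype_val).inter
          (isOpen_lt continuous_subtype_val continuous_const))
  have hEc : (univ : Set I) ⊆ ⋃ i, E i := by
    intro s _
    rcases eq_or_ne s 0 with rfl | hs0
    · refine mem_iUnion.mpr ⟨Sum.inl (), hS0m, ?_⟩
      show ((0 : I) : ℝ) < 1 / 2
      rw [Icc.coe_zero]; norm_num
    rcases eq_or_ne s 1 with rfl | hs1
    · refine mem_iUnion.mpr ⟨Sum.inr (Sum.inl ()), hS1m, ?_⟩
      show 1 / 2 < ((1 : I) : ℝ)
      rw [Icc.coe_one]; norm_num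
    · refine mem_iUnion.mpr ⟨Sum.inr (Sum.inr s), hStm s, ?_, ?_⟩
      · exact lt_of_le_of_ne s.2.1 fun h' => hs0 (Subtype.ext h'.symm)
      · exact lt_of_le_of_ne s.2.2 fun h' => hs1 (Subtype.ext h')
  obtain ⟨δ₀, hδ₀, hδball⟩ := lebesgue_number_lemma_of_metric isCompact_univ hEo hEc
  obtain ⟨m, hm⟩ := exists_nat_one_div_lt hδ₀
  set n := m + 1 with hndef
  have hn : 0 < n := Nat.succ_pos m
  have hinv : (1 : ℝ) / n < δ₀ := by exact_mod_cast hm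
  have hWex : ∀ i, i < n → ∃ S : Set X, IsOpen S ∧ RelInessential X S ∧
      MapsTo β (Icc (ptn n i) (ptn n (i + 1))) S ∧ (i = 0 → S ⊆ V) ∧ (i = n - 1 → S ⊆ U) := by
    intro i hi
    obtain ⟨j, hj⟩ := hδball (ptn n i) (mem_univ _)
    have hi1 : i + 1 ≤ n := hi
    have hIcc : Icc (ptn n i) (ptn n (i + 1)) ⊆ Metric.ball (ptn n i) δ₀ := by
      intro s hs
      have h1' : (ptn n i : ℝ) ≤ s := hs.1
      have h2' : (s : ℝ) ≤ ptn n (i + 1) := hs.2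
      rw [Metric.mem_ball, Subtype.dist_eq, Real.dist_eq]
      rw [ptn_coe hn (le_of_lt hi)] at h1' ⊢
      rw [ptn_coe hn hi1] at h2'
      rw [abs_of_nonneg (by linarith)]
      have harith : ((i : ℝ) + 1) / n - (i : ℝ) / n = 1 / n := by
        field_simp; ring
      have hcast : (((i + 1 : ℕ)) : ℝ) = (i : ℝ) + 1 := by push_cast; ring
      rw [hcast] at h2'
      linarith
    have hsub := hIcc.trans hj
    have hn1 : n - 1 + 1 = n := Nat.sub_add_cancel hn
    have h1mem : i = n - 1 → (1 : I) ∈ Icc (ptn n i) (ptn n (i + 1)) := by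
      intro hlast
      refine ⟨le_one', ?_⟩
      rw [hlast, hn1, ptn_n hn]
    have h0mem : i = 0 → (0 : I) ∈ Icc (ptn n i) (ptn n (i + 1)) := by
      intro hfirst
      refine ⟨?_, nonneg'⟩
      rw [hfirst, ptn_zero]
    obtain j | j | t := j
    · refine ⟨S0, hS0o, hS0i, fun s hs => (hsub hs).1, fun _ => hS0V, fun hlast => ?_⟩
      exfalso
      have h12 := (hsub (h1mem hlast)).2
      rw [mem_setOf_eq, Icc.coe_one] at h12
      norm_num at h12
    · refine ⟨S1, hS1o, hS1i, fun s hs => (hsub hs).1, fun hfirst => ?_, fun _ => hS1U⟩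
      exfalso
      have h12 := (hsub (h0mem hfirst)).2
      rw [mem_setOf_eq, Icc.coe_zero] at h12
      norm_num at h12
    · refine ⟨St t, hSto t, hSti t, fun s hs => (hsub hs).1, fun hfirst => ?_, fun hlast => ?_⟩
      · exfalso
        have h12 := (hsub (h0mem hfirst)).2.1
        rw [mem_setOf_eq, Icc.coe_zero] at h12
        norm_num at h12
      · exfalso
        have h12 := (hsub (h1mem hlast)).2.2
        rw [mem_setOf_eq, Icc.coe_one] at h12
        norm_num at h12
  choose W0 hW0o hW0i hW0m hW0V hW0U using hWex
  set Wn : ℕ → Set X := fun i => if h : i < n then W0 i h else univ with hWndef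
  have hWno : ∀ i, IsOpen (Wn i) := by
    intro i
    by_cases h : i < n
    · simp only [hWndef, dif_pos h]; exact hW0o i h
    · simp only [hWndef, dif_neg h]; exact isOpen_univ
  have hWni : ∀ i, i < n → RelInessential X (Wn i) := fun i h => by
    simp only [hWndef, dif_pos h]; exact hW0i i h
  have hWnm : ∀ i, i < n → MapsTo β (Icc (ptn n i) (ptn n (i + 1))) (Wn i) := fun i h => by
    simp only [hWndef, dif_pos h]; exact hW0m i h
  have hWnV : Wn 0 ⊆ V := by
    simp only [hWndef, dif_pos hn]; exact hW0V 0 hn rfl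
  have hWnU : Wn (n - 1) ⊆ U := by
    have hlt : n - 1 < n := Nat.sub_lt hn one_pos
    simp only [hWndef, dif_pos hlt]; exact hW0U _ hlt rfl
  have hQmem : ∀ j, j ≤ n → β (ptn n j) ∈
      ((if j = 0 then univ else Wn (j - 1)) ∩ (if j < n then Wn j else univ)) := by
    intro j hj
    constructor
    · split_ifs with h
      · exact mem_univ _
      · have hj1 : j - 1 < n := lt_of_lt_of_le (Nat.pred_lt h) hj
        apply hWnm (j - 1) hj1
        have hj2 : j - 1 + 1 = j := Nat.succ_pred_eq_of_pos (Nat.pos_of_ne_zero h)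
        refine ⟨ptn_mono (Nat.sub_le j 1), ?_⟩
        rw [hj2]
    · split_ifs with h
      · exact hWnm j h ⟨le_rfl, ptn_mono (Nat.le_succ j)⟩
      · exact mem_univ _
  set P : ℕ → Set X := fun j => pathComponentIn
      ((if j = 0 then univ else Wn (j - 1)) ∩ (if j < n then Wn j else univ)) (β (ptn n j)) with hPdef
  have hPo : ∀ j, IsOpen (P j) := by
    intro j
    apply IsOpen.pathComponentIn
    apply IsOpen.inter <;> split_ifs <;> first | exact isOpen_univ | apply hWno
  have hPmem : ∀ j, j ≤ n → β (ptn n j) ∈ P j := fun j hj =>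
    mem_pathComponentIn_self (hQmem j hj)
  set N : Set C(I, X) :=
    (⋂ i ∈ Finset.range n, {h : C(I, X) | MapsTo h (Icc (ptn n i) (ptn n (i + 1))) (Wn i)}) ∩
      ⋂ j ∈ Finset.range (n + 1), {h : C(I, X) | h (ptn n j) ∈ P j} with hNdef
  have hNo : IsOpen N := by
    apply IsOpen.inter
    · apply isOpen_biInter_finset
      intro i _
      exact ContinuousMap.isOpen_setOf_mapsTo isClosed_Icc.isCompact (hWno i)
    · apply isOpen_biInter_finset
      intro j _
      exact (hPo j).preimage (continuous_eval_const _)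
  have hNβ : β ∈ N := by
    constructor
    · rw [mem_iInter₂]
      exact fun i hi => hWnm i (Finset.mem_range.mp hi)
    · rw [mem_iInter₂]
      exact fun j hj => hPmem j (Nat.lt_succ_iff.mp (Finset.mem_range.mp hj))
  refine ⟨N, hNo, hNβ, ?_⟩
  intro β' hβ'
  have hM : ∀ i, i < n → MapsTo β' (Icc (ptn n i) (ptn n (i + 1))) (Wn i) := by
    intro i hi
    have h' := hβ'.1
    rw [mem_iInter₂] at h'
    exact h' i (Finset.mem_range.mpr hi)
  have hPt : ∀ j, j ≤ n → β' (ptn n j) ∈ P j := by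
    intro j hj
    have h' := hβ'.2
    rw [mem_iInter₂] at h'
    exact h' j (Finset.mem_range.mpr (Nat.lt_succ_of_le hj))
  have hc : ∀ j, j ≤ n → ∃ p : Path (β (ptn n j)) (β' (ptn n j)),
      range p ⊆ ((if j = 0 then univ else Wn (j - 1)) ∩ (if j < n then Wn j else univ)) := by
    intro j hj
    have hpc : IsPathConnected (P j) := isPathConnected_pathComponentIn (hQmem j hj)
    obtain ⟨p, hp⟩ := hpc.joinedIn _ (hPmem j hj) _ (hPt j hj)
    exact ⟨p, (range_subset_iff.mpr hp).trans pathComponentIn_subset⟩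
  choose cp hcp using hc
  have hc1 : ∀ j (hj0 : 0 < j) (hj : j ≤ n), range (cp j hj) ⊆ Wn (j - 1) := by
    intro j hj0 hj
    refine (hcp j hj).trans (inter_subset_left.trans ?_)
    rw [if_neg (Nat.pos_iff_ne_zero.mp hj0)]
  have hc2 : ∀ j (hj : j < n), range (cp j hj.le) ⊆ Wn j := by
    intro j hj
    refine (hcp j hj.le).trans (inter_subset_right.trans ?_)
    rw [if_pos hj]
  have hfin := core β β' n hn Wn hWni hWnm hM cp hc1 hc2 n le_rfl
  have hWhole : ∀ h' : C(I, X), PHom (toPath h')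
      (subpath h' (ptn n 0) (ptn n n) (ptn_mono (Nat.zero_le n))) := by
    intro h'
    apply PHom.ofEq
    intro t
    apply congrArg
    ext
    show (t : ℝ) = (ptn n 0 : ℝ) + (t : ℝ) * ((ptn n n : ℝ) - (ptn n 0 : ℝ))
    rw [ptn_zero, ptn_n hn, Icc.coe_zero, Icc.coe_one]
    ring
  refine ⟨((cp 0 (Nat.zero_le n)).symm).cast (congrArg β' (ptn_zero n).symm)
      (congrArg β (ptn_zero n).symm),
    (cp n le_rfl).cast (congrArg β (ptn_n hn).symm) (congrArg β' (ptn_n hn).symm), ?_, ?_, ?_⟩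
  · show range ((cp 0 (Nat.zero_le n)).symm).toFun ⊆ V
    have hr : range ((cp 0 (Nat.zero_le n)).symm).toFun = range (cp 0 (Nat.zero_le n)) := by
      rw [show range ((cp 0 (Nat.zero_le n)).symm).toFun
        = range (cp 0 (Nat.zero_le n)).symm from rfl, Path.symm_range]
    rw [hr]
    exact (hc2 0 hn).trans hWnV
  · show range (cp n le_rfl).toFun ⊆ U
    have hr : range (cp n le_rfl).toFun = range (cp n le_rfl) := rfl
    rw [hr]
    exact (hc1 n hn le_rfl).trans hWnU
  · refine (hWhole β').trans' (hfin.trans' ?_)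
    exact PHom.hcomp (PHom.hcomp (PHom.ofEq fun t => rfl) ((hWhole β).symm'))
      (PHom.ofEq fun t => rfl)

/-! ### The absorption lemma -/

theorem absorb (α : C(I, X)) {W : Set C(I, X)} (hW : IsOpen W) (hα : α ∈ W) :
    ∃ U V : Set X, IsOpen U ∧ α 1 ∈ U ∧ IsOpen V ∧ α 0 ∈ V ∧
      ∀ (x y : X) (θ : Path x (α 0)) (δ : Path (α 1) y),
        range θ ⊆ V → range δ ⊆ U →
        ∃ g₀ ∈ W, pRel g₀ ((θ.trans ((toPath α).trans δ)).toContinuousMap) := by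
  classical
  have hbasis := TopologicalSpace.isTopologicalBasis_of_subbasis
    (ContinuousMap.compactOpen_eq (X := I) (Y := X))
  obtain ⟨B, hB, hαB, hBW⟩ := hbasis.exists_subset_of_mem_open hα hW
  obtain ⟨T, ⟨hTfin, hTsub⟩, rfl⟩ := hB
  haveI : Finite ↥T := hTfin.to_subtype
  have hdata : ∀ S : ↥T, ∃ KU : Set I × Set X, IsCompact KU.1 ∧ IsOpen KU.2 ∧
      (S : Set C(I, X)) = {f : C(I, X) | MapsTo f KU.1 KU.2} := by
    intro S
    obtain ⟨K, hK, U', hU', hSval⟩ := hTsub S.2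
    exact ⟨(K, U'), hK, hU', hSval.symm⟩
  choose KU hKc hUo hSeq using hdata
  have hαS : ∀ S : ↥T, MapsTo α (KU S).1 (KU S).2 := by
    intro S
    have hmem : α ∈ (S : Set C(I, X)) := mem_sInter.mp hαB _ S.2
    rw [hSeq S] at hmem
    exact hmem
  have heS : ∀ S : ↥T, ∃ e : ℝ, 0 < e ∧
      (∀ s t : I, t ∈ (KU S).1 → dist s t ≤ 2 * e → α s ∈ (KU S).2) ∧
      ((0 : I) ∉ (KU S).1 → ∀ t ∈ (KU S).1, e < dist (0 : I) t) ∧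
      ((1 : I) ∉ (KU S).1 → ∀ t ∈ (KU S).1, e < dist (1 : I) t) := by
    intro S
    obtain ⟨d1, hd1, hthick⟩ := (hKc S).exists_thickening_subset_open
      ((hUo S).preimage α.continuous) (fun t ht => hαS S ht)
    have h0side : ∃ d2 : ℝ, 0 < d2 ∧
        ((0 : I) ∉ (KU S).1 → ∀ t ∈ (KU S).1, d2 < dist (0 : I) t) := by
      by_cases h : (0 : I) ∈ (KU S).1
      · exact ⟨1, one_pos, fun h' => absurd h h'⟩
      · obtain ⟨r, hr, hball⟩ := Metric.isOpen_iff.mp (hKc S).isClosed.isOpen_compl 0 h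
        refine ⟨r / 2, half_pos hr, fun _ t ht => ?_⟩
        by_contra hle
        push_neg at hle
        exact (hball (show t ∈ Metric.ball (0 : I) r by
          rw [Metric.mem_ball, dist_comm]; linarith)) ht
    have h1side : ∃ d3 : ℝ, 0 < d3 ∧
        ((1 : I) ∉ (KU S).1 → ∀ t ∈ (KU S).1, d3 < dist (1 : I) t) := by
      by_cases h : (1 : I) ∈ (KU S).1
      · exact ⟨1, one_pos, fun h' => absurd h h'⟩
      · obtain ⟨r, hr, hball⟩ := Metric.isOpen_iff.mp (hKc S).isClosed.isOpen_compl 1 h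
        refine ⟨r / 2, half_pos hr, fun _ t ht => ?_⟩
        by_contra hle
        push_neg at hle
        exact (hball (show t ∈ Metric.ball (1 : I) r by
          rw [Metric.mem_ball, dist_comm]; linarith)) ht
    obtain ⟨d2, hd2, h0s⟩ := h0side
    obtain ⟨d3, hd3, h1s⟩ := h1side
    refine ⟨min (d1 / 3) (min d2 d3), by positivity, ?_, ?_, ?_⟩
    · intro s t ht hdist
      apply hthick
      rw [Metric.mem_thickening_iff]
      refine ⟨t, ht, ?_⟩
      have hm1 : min (d1 / 3) (min d2 d3) ≤ d1 / 3 := min_le_left _ _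
      calc dist s t ≤ 2 * min (d1 / 3) (min d2 d3) := hdist
        _ ≤ 2 * (d1 / 3) := by linarith
        _ < d1 := by linarith
    · intro h t ht
      have hlt := h0s h t ht
      have hm : min (d1 / 3) (min d2 d3) ≤ d2 := (min_le_right _ _).trans (min_le_left _ _)
      linarith
    · intro h t ht
      have hlt := h1s h t ht
      have hm : min (d1 / 3) (min d2 d3) ≤ d3 := (min_le_right _ _).trans (min_le_right _ _)
      linarith
  choose ee he0 hethick he0side he1side using heS
  have hεex : ∃ ε : ℝ, 0 < ε ∧ ε ≤ 1 / 8 ∧ ∀ S : ↥T, ε ≤ ee S := by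
    cases isEmpty_or_nonempty ↥T with
    | inl h => exact ⟨1 / 8, by norm_num, le_rfl, fun S => (h.false S).elim⟩
    | inr h =>
      haveI := Fintype.ofFinite ↥T
      have hne : (Finset.univ : Finset ↥T).Nonempty := Finset.univ_nonempty
      refine ⟨min (1 / 8) (Finset.univ.inf' hne ee), ?_, min_le_left _ _, ?_⟩
      · apply lt_min (by norm_num)
        rw [Finset.lt_inf'_iff]
        exact fun S _ => he0 S
      · exact fun S => (min_le_right _ _).trans (Finset.inf'_le _ (Finset.mem_univ S))
  obtain ⟨ε, hε0, hε8, hεS⟩ := hεex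
  refine ⟨⋂ S : { S : ↥T // (1 : I) ∈ (KU S).1 }, (KU S.1).2,
    ⋂ S : { S : ↥T // (0 : I) ∈ (KU S).1 }, (KU S.1).2,
    isOpen_iInter_of_finite fun S => hUo S.1,
    mem_iInter.mpr fun S => hαS S.1 S.2,
    isOpen_iInter_of_finite fun S => hUo S.1,
    mem_iInter.mpr fun S => hαS S.1 S.2, ?_⟩
  intro x y θ δ hθV hδU
  -- the reparametrization
  set l1 : ℝ → ℝ := fun r => r / (2 * ε) with hl1
  set l2 : ℝ → ℝ := fun r => (2 * (1 - 2 * ε) + r - ε) / (4 * (1 - 2 * ε)) with hl2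
  set l3 : ℝ → ℝ := fun r => (4 * ε + r - 1) / (4 * ε) with hl3
  set ψ : ℝ → ℝ := fun r => max (min (l1 r) (l2 r)) (l3 r) with hψdef
  have hd1 : (0 : ℝ) < 2 * ε := by linarith
  have hd2 : (0 : ℝ) < 4 * (1 - 2 * ε) := by linarith
  have hd3 : (0 : ℝ) < 4 * ε := by linarith
  have hψc : Continuous ψ := by
    apply Continuous.max (Continuous.min (by fun_prop) (by fun_prop)) (by fun_prop)
  have hF1a : ∀ r : ℝ, 0 ≤ r → 0 ≤ ψ r := by
    intro r hr
    refine le_trans (le_min ?_ ?_) (le_max_left _ _)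
    · exact div_nonneg hr hd1.le
    · exact div_nonneg (by linarith) hd2.le
  have hF1b : ∀ r : ℝ, r ≤ 1 → ψ r ≤ 1 := by
    intro r hr
    apply max_le
    · refine (min_le_right _ _).trans ?_
      simp only [hl2]
      rw [div_le_one hd2]
      linarith
    · simp only [hl3]
      rw [div_le_one hd3]
      linarith
  have hφmem : ∀ t : I, ψ t ∈ I := fun t => ⟨hF1a t t.2.1, hF1b t t.2.2⟩
  set φ : I → I := fun t => ⟨ψ t, hφmem t⟩ with hφdef
  have hφc : Continuous φ := Continuous.subtype_mk (hψc.comp continuous_subtype_val) _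
  have hφ0 : φ 0 = 0 := by
    ext
    show ψ ((0 : I) : ℝ) = 0
    rw [Icc.coe_zero]
    simp only [hψdef, hl1, hl2, hl3]
    rw [zero_div]
    rw [min_eq_left (by rw [le_div_iff₀ hd2]; linarith)]
    rw [max_eq_left (by rw [div_le_iff₀ hd3]; linarith)]
  have hφ1 : φ 1 = 1 := by
    ext
    show ψ ((1 : I) : ℝ) = 1
    rw [Icc.coe_one]
    simp only [hψdef, hl1, hl2, hl3]
    rw [max_eq_right, show (4 * ε + 1 - 1) / (4 * ε) = 1 by field_simp; ring]
    refine (min_le_right _ _).trans ?_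
    rw [show (4 * ε + 1 - 1) / (4 * ε) = 1 by field_simp; ring, div_le_one hd2]
    linarith
  have hF3 : ∀ t : I, (t : ℝ) ≤ ε → (φ t : ℝ) ≤ 1 / 2 := by
    intro t ht
    show ψ t ≤ 1 / 2
    simp only [hψdef]
    apply max_le
    · refine (min_le_left _ _).trans ?_
      simp only [hl1]
      rw [div_le_iff₀ hd1]
      linarith
    · simp only [hl3]
      rw [div_le_iff₀ hd3]
      have := t.2.1
      linarith
  have hF4 : ∀ t : I, 1 - ε ≤ (t : ℝ) → 3 / 4 ≤ (φ t : ℝ) := by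
    intro t ht
    refine le_trans ?_ (le_max_right _ _)
    simp only [hl3]
    rw [le_div_iff₀ hd3]
    linarith
  have hF5 : ∀ t : I, ε ≤ (t : ℝ) → (t : ℝ) ≤ 1 - ε → (φ t : ℝ) = l2 t := by
    intro t ht1 ht2
    show ψ t = l2 t
    simp only [hψdef]
    rw [min_eq_right (by
      simp only [hl1, hl2]
      rw [div_le_div_iff₀ hd2 hd1]
      nlinarith [mul_nonneg (by linarith : (0:ℝ) ≤ (t:ℝ) - ε) (by linarith : (0:ℝ) ≤ 4 - 10 * ε)])]
    rw [max_eq_left (by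
      simp only [hl2, hl3]
      rw [div_le_div_iff₀ hd3 hd2]
      nlinarith [mul_nonneg (by linarith : (0:ℝ) ≤ 1 - ε - (t:ℝ)) (by linarith : (0:ℝ) ≤ 4 - 12 * ε)])]
  set Pp : Path x y := θ.trans ((toPath α).trans δ) with hPpdef
  refine ⟨(Pp.reparam φ hφc hφ0 hφ1).toContinuousMap, ?_,
    pRel_symm ⟨Path.Homotopy.reparam Pp φ hφc hφ0 hφ1⟩⟩
  apply hBW
  rw [mem_sInter]
  intro Sv hSv
  have hSeq' := hSeq ⟨Sv, hSv⟩
  rw [show ((⟨Sv, hSv⟩ : ↥T) : Set C(I, X)) = Sv from rfl] at hSeq'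
  rw [hSeq']
  intro t ht
  set S : ↥T := ⟨Sv, hSv⟩ with hSdef
  have hεe : ε ≤ ee S := hεS S
  show Pp (φ t) ∈ (KU S).2
  rcases le_or_gt (t : ℝ) ε with hA | hA
  · -- left part: inside θ
    have h0K : (0 : I) ∈ (KU S).1 := by
      by_contra h0K
      have hgt := he0side S h0K t ht
      have hdt : dist (0 : I) t = (t : ℝ) := by
        rw [Subtype.dist_eq, Icc.coe_zero, Real.dist_eq, abs_sub_comm, sub_zero,
          abs_of_nonneg t.2.1]
      rw [hdt] at hgt
      linarith
    rw [hPpdef, Path.trans_apply, dif_pos (hF3 t hA)]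
    exact iInter_subset (fun S' : { S' : ↥T // (0 : I) ∈ (KU S').1 } => (KU S'.1).2)
        ⟨S, h0K⟩ (hθV (mem_range_self _))
  rcases le_or_gt (1 - ε) (t : ℝ) with hC | hC
  · -- right part: inside δ (or the point α 1)
    have h1K : (1 : I) ∈ (KU S).1 := by
      by_contra h1K
      have hgt := he1side S h1K t ht
      have hdt : dist (1 : I) t = 1 - (t : ℝ) := by
        rw [Subtype.dist_eq, Icc.coe_one, Real.dist_eq,
          abs_of_nonneg (by linarith [t.2.2] : (0:ℝ) ≤ 1 - (t:ℝ))]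
      rw [hdt] at hgt
      linarith
    have h34 := hF4 t hC
    rw [hPpdef, Path.trans_apply, dif_neg (by push_neg; linarith)]
    rw [Path.trans_apply]
    split_ifs with hinner
    · -- boundary point: value is α at coordinate 1
      have h1le : ∀ z : I, (z : ℝ) = 1 → α z ∈ (KU S).2 := by
        intro z hz
        rw [show z = 1 from Subtype.ext (by rw [hz, Icc.coe_one])]
        exact hαS S h1K
      have hinner' : 2 * (φ t : ℝ) - 1 ≤ 1 / 2 := hinner
      refine h1le _ ?_
      show 2 * (2 * (φ t : ℝ) - 1) = 1
      have hle1 : (φ t : ℝ) ≤ 1 := (φ t).2.2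
      linarith
    · exact iInter_subset (fun S' : { S' : ↥T // (1 : I) ∈ (KU S').1 } => (KU S'.1).2)
        ⟨S, h1K⟩ (hδU (mem_range_self _))
  · -- middle part: value is α at a point close to t
    have hψval := hF5 t hA.le hC.le
    have h12 : 1 / 2 < (φ t : ℝ) := by
      rw [hψval]
      simp only [hl2]
      rw [lt_div_iff₀ hd2]
      linarith
    have h34 : (φ t : ℝ) ≤ 3 / 4 := by
      rw [hψval]
      simp only [hl2]
      rw [div_le_iff₀ hd2]
      linarith
    have hsm : ∀ z : I, (z : ℝ) = ((t : ℝ) - ε) / (1 - 2 * ε) → α z ∈ (KU S).2 := by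
      intro z hz
      refine hethick S z t ht ?_
      rw [Subtype.dist_eq, Real.dist_eq, hz]
      have hden : (0 : ℝ) < 1 - 2 * ε := by linarith
      have key : (((t : ℝ) - ε) / (1 - 2 * ε)) * (1 - 2 * ε) = (t : ℝ) - ε :=
        div_mul_cancel₀ _ (ne_of_gt hden)
      have hz0 : (0 : ℝ) ≤ ((t : ℝ) - ε) / (1 - 2 * ε) :=
        div_nonneg (by linarith) hden.le
      have hz1 : ((t : ℝ) - ε) / (1 - 2 * ε) ≤ 1 := by
        rw [div_le_one hden]; linarith [t.2.2]
      have hprod0 : 0 ≤ ((t : ℝ) - ε) / (1 - 2 * ε) * ε := mul_nonneg hz0 hε0.le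
      have hprod1 : ((t : ℝ) - ε) / (1 - 2 * ε) * ε ≤ ε := mul_le_of_le_one_left hε0.le hz1
      rw [abs_le]
      constructor
      · linarith [key]
      · linarith [key]
    rw [hPpdef, Path.trans_apply, dif_neg (by push_neg; linarith)]
    rw [Path.trans_apply]
    split_ifs with h2
    · refine hsm _ ?_
      show 2 * (2 * (φ t : ℝ) - 1) = ((t : ℝ) - ε) / (1 - 2 * ε)
      rw [hψval]
      simp only [hl2]
      have hden : (0 : ℝ) < 1 - 2 * ε := by linarith
      field_simp
      ring
    · exfalso
      have h2' : ¬ (2 * (φ t : ℝ) - 1 ≤ 1 / 2) := h2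
      exact h2' (by linarith)

/-! ### Openness of the quotient map -/

theorem isOpenMap_pq (hX : SemilocSimplyConnected X) [LocallyPathConnectedSpace X] :
    IsOpenMap (pq : C(I, X) → Pi1 X) := by
  intro W hW
  letI : Setoid C(I, X) := pSetoid X
  have hquot : Topology.IsQuotientMap (pq : C(I, X) → Pi1 X) := isQuotientMap_quotient_mk'
  rw [← hquot.isOpen_preimage]
  rw [isOpen_iff_forall_mem_open]
  intro β' hβ'
  obtain ⟨α, hαW, hrel⟩ : ∃ α ∈ W, pq α = pq β' := by
    obtain ⟨α, hαW, h⟩ := hβ'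
    exact ⟨α, hαW, h⟩
  have hPH : PHom (toPath α) (toPath β') := Quotient.exact hrel
  have h0 : α 0 = β' 0 := hPH.src
  have h1 : α 1 = β' 1 := hPH.tgt
  obtain ⟨U, V, hUo, hU1, hVo, hV0, habs⟩ := absorb α hW hαW
  obtain ⟨N, hNo, hNβ', hN⟩ := nearby hX β' hUo (h1 ▸ hU1) hVo (h0 ▸ hV0)
  refine ⟨N, fun β'' hβ'' => ?_, hNo, hNβ'⟩
  obtain ⟨θ, δ, hθ, hδ, hph⟩ := hN β'' hβ''
  set θ' : Path (β'' 0) (α 0) := θ.cast rfl h0 with hθ'def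
  set δ' : Path (α 1) (β'' 1) := δ.cast h1 rfl with hδ'def
  obtain ⟨g₀, hg₀W, hg₀rel⟩ := habs (β'' 0) (β'' 1) θ' δ'
    (by rw [show range θ' = range θ from rfl]; exact hθ)
    (by rw [show range δ' = range δ from rfl]; exact hδ)
  show pq β'' ∈ pq '' W
  refine ⟨g₀, hg₀W, ?_⟩
  have hph2 : PHom (toPath β'') (θ'.trans ((toPath α).trans δ')) := by
    refine hph.trans' ?_
    refine (phom_assoc θ (toPath β') δ).trans' ?_
    exact PHom.hcomp (PHom.ofEq fun t => rfl)
      (PHom.hcomp (hPH.symm') (PHom.ofEq fun t => rfl))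
  calc pq g₀ = pq ((θ'.trans ((toPath α).trans δ')).toContinuousMap) := Quotient.sound hg₀rel
    _ = pq β'' := (pq_eq_of_phom hph2).symm

/-! ### Well-definedness of concatenation on `Π₁` -/

theorem concat_welldef {α α' β β' : C(I, X)} (hα : pq α = pq α') (hβ : pq β = pq β')
    (h : β 1 = α 0) (h' : β' 1 = α' 0) :
    pq (concat α β h) = pq (concat α' β' h') := by
  have hab : PHom (toPath α) (toPath α') := Quotient.exact hα
  have hbb : PHom (toPath β) (toPath β') := Quotient.exact hβ
  apply pq_eq_of_phom (p := (toPath β).trans ((toPath α).cast h rfl))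
    (q := (toPath β').trans ((toPath α').cast h' rfl))
  exact PHom.hcomp hbb ((PHom.ofEq (fun t => rfl)).trans'
    (hab.trans' (PHom.ofEq (fun t => rfl))))

/-! ### Continuity of concatenation on the path space -/

theorem continuous_concat :
    Continuous (fun x : { p : C(I, X) × C(I, X) // p.2 1 = p.1 0 } =>
      concat x.1.1 x.1.2 x.2) := by
  apply ContinuousMap.continuous_of_continuous_uncurry
  have heq : (Function.uncurry fun (x : { p : C(I, X) × C(I, X) // p.2 1 = p.1 0 }) (t : I) =>
        (concat x.1.1 x.1.2 x.2) t)
      = fun z : { p : C(I, X) × C(I, X) // p.2 1 = p.1 0 } × I =>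
          if ((z.2 : ℝ)) ≤ 1 / 2
          then z.1.1.2 (Set.projIcc 0 1 zero_le_one (2 * (z.2 : ℝ)))
          else z.1.1.1 (Set.projIcc 0 1 zero_le_one (2 * (z.2 : ℝ) - 1)) := by
    funext z
    show ((toPath z.1.1.2).trans ((toPath z.1.1.1).cast z.1.2 rfl)) z.2 = _
    rw [Path.trans_apply]
    split_ifs with h
    · show z.1.1.2 _ = z.1.1.2 _
      apply congrArg
      exact (Set.projIcc_of_mem zero_le_one ⟨by linarith [z.2.2.1], by linarith [z.2.2.1]⟩).symm
    · show z.1.1.1 _ = z.1.1.1 _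
      apply congrArg
      push_neg at h
      exact (Set.projIcc_of_mem zero_le_one ⟨by linarith, by linarith [z.2.2.2]⟩).symm
  rw [heq]
  apply Continuous.if_le
  · have hp : Continuous fun z : { p : C(I, X) × C(I, X) // p.2 1 = p.1 0 } × I =>
        ((z.1.1.2 : C(I, X)), Set.projIcc (0:ℝ) 1 zero_le_one (2 * (z.2 : ℝ))) :=
      (continuous_snd.comp (continuous_subtype_val.comp continuous_fst)).prodMk
        (continuous_projIcc.comp (by fun_prop))
    exact continuous_eval.comp hp
  · have hp : Continuous fun z : { p : C(I, X) × C(I, X) // p.2 1 = p.1 0 } × I =>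
        ((z.1.1.1 : C(I, X)), Set.projIcc (0:ℝ) 1 zero_le_one (2 * (z.2 : ℝ) - 1)) :=
      (continuous_fst.comp (continuous_subtype_val.comp continuous_fst)).prodMk
        (continuous_projIcc.comp (by fun_prop))
    exact continuous_eval.comp hp
  · fun_prop
  · fun_prop
  · intro z hz
    rw [hz]
    have h1 : Set.projIcc (0:ℝ) 1 zero_le_one (2 * (1/2)) = 1 := by
      rw [show (2:ℝ) * (1/2) = 1 by norm_num]
      simp [Set.projIcc]
    have h2 : Set.projIcc (0:ℝ) 1 zero_le_one (2 * (1/2) - 1) = 0 := by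
      rw [show (2:ℝ) * (1/2) - 1 = 0 by norm_num]
      simp [Set.projIcc]
    rw [h1, h2]
    exact z.1.2

end Stmt4

/-- For a locally path connected, semilocally simply connected `X`, the
composition map on `Π₁(X)^{(2)} = {(a,b) : s(a) = r(b)}` (with the subspace topology of the
product), sending `([α],[β])` with `α 0 = β 1` to `[α ⧠ β]`, is well defined and continuous. -/
theorem stmt4 {X : Type*} [TopologicalSpace X] [LocallyPathConnectedSpace X]
    (hX : SemilocSimplyConnected X) :
    ∃ comp : { p : Pi1 X × Pi1 X // srcMap p.1 = rngMap p.2 } → Pi1 X,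
      Continuous comp ∧
      ∀ (α β : C(I, X)) (h : β 1 = α 0),
        comp ⟨(pq α, pq β), h.symm⟩ = pq (concat α β h) := by
  classical
  -- the composition map, defined via representatives
  have hout : ∀ a : Pi1 X, pq a.out = a := fun a => Quotient.out_eq a
  have hsrc : ∀ a : Pi1 X, srcMap a = a.out 0 := fun a => by
    conv_lhs => rw [← hout a]
    rfl
  have hrng : ∀ a : Pi1 X, rngMap a = a.out 1 := fun a => by
    conv_lhs => rw [← hout a]
    rfl
  set comp : { p : Pi1 X × Pi1 X // srcMap p.1 = rngMap p.2 } → Pi1 X :=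
    fun p => pq (concat p.1.1.out p.1.2.out (by rw [← hsrc p.1.1, ← hrng p.1.2]; exact p.2.symm))
    with hcompdef
  have hspec : ∀ (α β : C(I, X)) (h : β 1 = α 0),
      comp ⟨(pq α, pq β), h.symm⟩ = pq (concat α β h) := by
    intro α β h
    exact Stmt4.concat_welldef (hout (pq α)) (hout (pq β)) _ h
  refine ⟨comp, ?_, hspec⟩
  -- the restricted product quotient map
  set Q : { p : C(I, X) × C(I, X) // p.2 1 = p.1 0 } →
      { p : Pi1 X × Pi1 X // srcMap p.1 = rngMap p.2 } :=
    fun x => ⟨(pq x.1.1, pq x.1.2), x.2.symm⟩ with hQdef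
  have hQc : Continuous Q := by
    apply Continuous.subtype_mk
    exact ((continuous_quotient_mk'.comp (continuous_fst.comp continuous_subtype_val)).prodMk
      (continuous_quotient_mk'.comp (continuous_snd.comp continuous_subtype_val)))
  have hQsurj : Function.Surjective Q := by
    rintro ⟨⟨a, b⟩, hab⟩
    refine ⟨⟨(a.out, b.out), by rw [← hsrc a, ← hrng b]; exact hab.symm⟩, ?_⟩
    apply Subtype.ext
    simp only [hQdef]
    exact Prod.ext (hout a) (hout b)
  have hpqopen : IsOpenMap (pq : C(I, X) → Pi1 X) := Stmt4.isOpenMap_pq hX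
  have hQopen : IsOpenMap Q := by
    intro O hO
    obtain ⟨O', hO', rfl⟩ := isOpen_induced_iff.mp hO
    have himg : Q '' (Subtype.val ⁻¹' O') =
        Subtype.val ⁻¹' (Prod.map pq pq '' O') := by
      apply Set.Subset.antisymm
      · rintro _ ⟨x, hx, rfl⟩
        exact ⟨x.1, hx, rfl⟩
      · rintro s ⟨p, hp, hps⟩
        have hpt : p.2 1 = p.1 0 := by
          have h2 := s.2
          rw [← hps] at h2
          exact h2.symm
        exact ⟨⟨p, hpt⟩, hp, Subtype.ext hps⟩
    rw [himg]
    exact (hpqopen.prodMap hpqopen O' hO').preimage continuous_subtype_val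
  have hQ : Topology.IsQuotientMap Q := hQopen.isQuotientMap hQc hQsurj
  rw [hQ.continuous_iff]
  have hcq : (comp ∘ Q) = fun x => pq (concat x.1.1 x.1.2 x.2) := by
    funext x
    exact hspec x.1.1 x.1.2 x.2
  rw [hcq]
  exact continuous_quotient_mk'.comp Stmt4.continuous_concat

end
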